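/- Let F : [0,∞) → [0,1] be a cumulative distribution function with finite first moment, and let H : [0,∞) → ℝ be a function of bounded variation that is a finite linear combination of CDFs of non-negative random variables with finite first moments. Define T_a(G) = ∫_0^∞ 2 y G(y) dG(y) for G of bounded variation (Riemann–Stieltjes integral). Then for every real t ≠ 0 one has the exact expansion ( T_a(F + tH) − T_a(F) ) / t = ∫_0^∞ 2 y H(y) dF(y) + ∫_0^∞ 2 y F(y) dH(y) + t ∫_0^∞ 2 y H(y) dH(y), and moreover the remainder satisfies the bound | t ∫_0^∞ 2 y H(y) dH(y) | ≤ 2 |t| C_1 C_2 whenever sup_y |H(y)| ≤ C_1 and |∫_0^∞ y d H(y)| ≤ C_2 for the total-variation decomposition of H; consequently the difference quotient converges to the linear map H ↦ ∫_0^∞ 2 y H(y) dF(y) + ∫_0^∞ 2 y F(y) dH(y) as t → 0, uniformly over sets of H with uniformly bounded sup-norm and uniformly bounded first moment of the total variation. -/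

import Mathlib

open MeasureTheory ProbabilityTheory

/-- A function of bounded variation on `[0,∞)` given as a finite linear combination of
CDFs of non-negative random variables with finite first moments. -/
structure MixCDF where
  /-- number of components -/
  k : ℕ
  /-- coefficients of the linear combination -/
  coef : Fin k → ℝ
  /-- component distributions -/
  meas : Fin k → Measure ℝ
  /-- each component is a probability distribution (a CDF) -/
  prob : ∀ i, IsProbabilityMeasure (meas i)
  /-- each component distribution is that of a non-negative random variable -/
  supp : ∀ i, meas i (Set.Iio 0) = 0
  /-- each component has a finite first moment -/
  moment : ∀ i, Integrable (fun y : ℝ => y) (meas i)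

/-- The function `H : ℝ → ℝ` represented by a `MixCDF`. -/
noncomputable def MixCDF.fn (H : MixCDF) (y : ℝ) : ℝ :=
  ∑ i, H.coef i * (H.meas i (Set.Iic y)).toReal

/-- The Riemann–Stieltjes integral `∫_0^∞ g(y) dH(y)` for a `MixCDF` `H`. -/
noncomputable def MixCDF.integral (H : MixCDF) (g : ℝ → ℝ) : ℝ :=
  ∑ i, H.coef i * ∫ y, g y ∂(H.meas i)

/-- The first moment of the total-variation decomposition of `H`,
`∑ i |λ_i| ∫_0^∞ y dF_i(y)`. -/
noncomputable def MixCDF.tvMoment (H : MixCDF) : ℝ :=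
  ∑ i, |H.coef i| * ∫ y, y ∂(H.meas i)

/-- The CDF of a measure on `ℝ`. -/
noncomputable def cdfOf (ν : Measure ℝ) (y : ℝ) : ℝ := (ν (Set.Iic y)).toReal

/-- For a CDF `F` (of the measure `ν`) perturbed by `t·H`, the value
`T_a(F + tH) = ∫_0^∞ 2y (F + tH)(y) d(F + tH)(y)` as a Riemann–Stieltjes integral. -/
noncomputable def Ta (ν : Measure ℝ) (t : ℝ) (H : MixCDF) : ℝ :=
  (∫ y, 2 * y * (cdfOf ν y + t * H.fn y) ∂ν)
    + t * H.integral (fun y => 2 * y * (cdfOf ν y + t * H.fn y))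

lemma cdfOf_measurable (ν : Measure ℝ) [IsFiniteMeasure ν] : Measurable (cdfOf ν) := by
  have hmono : Monotone (cdfOf ν) := fun a b hab =>
    ENNReal.toReal_mono (measure_ne_top ν _) (measure_mono (Set.Iic_subset_Iic.mpr hab))
  exact hmono.measurable

lemma cdfOf_abs_le (ν : Measure ℝ) [IsProbabilityMeasure ν] (y : ℝ) : |cdfOf ν y| ≤ 1 := by
  unfold cdfOf
  rw [abs_of_nonneg ENNReal.toReal_nonneg]
  calc (ν (Set.Iic y)).toReal ≤ (ν Set.univ).toReal :=
        ENNReal.toReal_mono (measure_ne_top _ _) (measure_mono (Set.subset_univ _))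
    _ = 1 := by simp

lemma MixCDF.fn_measurable (H : MixCDF) : Measurable H.fn := by
  unfold MixCDF.fn
  apply Finset.measurable_sum
  intro i _
  have : IsProbabilityMeasure (H.meas i) := H.prob i
  exact (cdfOf_measurable (H.meas i)).const_mul _

lemma MixCDF.fn_abs_le (H : MixCDF) (y : ℝ) : |H.fn y| ≤ ∑ i, |H.coef i| := by
  unfold MixCDF.fn
  refine (Finset.abs_sum_le_sum_abs _ _).trans (Finset.sum_le_sum fun i _ => ?_)
  have : IsProbabilityMeasure (H.meas i) := H.prob i
  rw [abs_mul]
  exact mul_le_of_le_one_right (abs_nonneg _) (cdfOf_abs_le (H.meas i) y)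

lemma integrable_two_mul {μ : Measure ℝ} (hμ : Integrable (fun y : ℝ => y) μ)
    {g : ℝ → ℝ} (hg : Measurable g) {M : ℝ} (hb : ∀ y, |g y| ≤ M) :
    Integrable (fun y => 2 * y * g y) μ := by
  have h := hμ.bdd_mul (c := 2 * M) ((hg.const_mul 2).aestronglyMeasurable)
      (Filter.Eventually.of_forall fun y => by
        have := hb y
        simp only [norm_mul, Real.norm_eq_abs]
        calc |(2:ℝ)| * |g y| = 2 * |g y| := by norm_num
          _ ≤ 2 * M := by linarith)
  have heq : (fun y => (2 * g y) * y) = fun y => 2 * y * g y := by funext y; ring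
  rwa [heq] at h

lemma MixCDF.integral_add_smul (H : MixCDF) (t : ℝ) {g1 g2 : ℝ → ℝ}
    (h1 : ∀ i, Integrable g1 (H.meas i)) (h2 : ∀ i, Integrable g2 (H.meas i)) :
    H.integral (fun y => g1 y + t * g2 y) = H.integral g1 + t * H.integral g2 := by
  unfold MixCDF.integral
  rw [Finset.mul_sum, ← Finset.sum_add_distrib]
  refine Finset.sum_congr rfl fun i _ => ?_
  rw [integral_add (h1 i) ((h2 i).const_mul t), integral_const_mul]
  ring

/-- **Exact expansion and remainder bound for the functional `T_a(F) = ∫ 2y F(y) dF(y)`.**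
Let `F` be the CDF of a distribution `ν` of a non-negative random variable with finite
first moment, and let `H` be a finite linear combination of CDFs of non-negative random
variables with finite first moments. Then for every `t ≠ 0`,
`(T_a(F + tH) − T_a(F))/t = ∫ 2y H dF + ∫ 2y F dH + t ∫ 2y H dH`;
the remainder satisfies `|t ∫ 2y H dH| ≤ 2 |t| C₁ C₂` whenever `sup |H| ≤ C₁` and the
first moment of the total-variation decomposition of `H` is bounded by `C₂`; and
consequently the difference quotient converges to the linear map
`H ↦ ∫ 2y H dF + ∫ 2y F dH` as `t → 0`, uniformly over such `H`. -/
theorem Ta_hadamard_expansion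
    (ν : Measure ℝ) [IsProbabilityMeasure ν] (hν0 : ν (Set.Iio 0) = 0)
    (hνm : Integrable (fun y : ℝ => y) ν) :
    (∀ (H : MixCDF) (t : ℝ), t ≠ 0 →
      (Ta ν t H - Ta ν 0 H) / t
        = (∫ y, 2 * y * H.fn y ∂ν) + H.integral (fun y => 2 * y * cdfOf ν y)
            + t * H.integral (fun y => 2 * y * H.fn y))
    ∧ (∀ (H : MixCDF) (t C₁ C₂ : ℝ), (∀ y : ℝ, |H.fn y| ≤ C₁) → H.tvMoment ≤ C₂ →
        |t * H.integral (fun y => 2 * y * H.fn y)| ≤ 2 * |t| * C₁ * C₂)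
    ∧ (∀ C₁ C₂ : ℝ, ∀ ε > (0 : ℝ), ∃ δ > (0 : ℝ), ∀ t : ℝ, t ≠ 0 → |t| < δ →
        ∀ H : MixCDF, (∀ y : ℝ, |H.fn y| ≤ C₁) → H.tvMoment ≤ C₂ →
          |(Ta ν t H - Ta ν 0 H) / t
              - ((∫ y, 2 * y * H.fn y ∂ν) + H.integral (fun y => 2 * y * cdfOf ν y))|
            ≤ ε) := by
  -- integrability facts
  have hg1 : ∀ (μ : Measure ℝ), Integrable (fun y : ℝ => y) μ →
      Integrable (fun y => 2 * y * cdfOf ν y) μ := fun μ hμ =>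
    integrable_two_mul hμ (cdfOf_measurable ν) (cdfOf_abs_le ν)
  have hg2 : ∀ (H : MixCDF) (μ : Measure ℝ), Integrable (fun y : ℝ => y) μ →
      Integrable (fun y => 2 * y * H.fn y) μ := fun H μ hμ =>
    integrable_two_mul hμ H.fn_measurable H.fn_abs_le
  -- part 1
  have part1 : ∀ (H : MixCDF) (t : ℝ), t ≠ 0 →
      (Ta ν t H - Ta ν 0 H) / t
        = (∫ y, 2 * y * H.fn y ∂ν) + H.integral (fun y => 2 * y * cdfOf ν y)
            + t * H.integral (fun y => 2 * y * H.fn y) := by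
    intro H t ht
    have hrw : ∀ s : ℝ, (fun y => 2 * y * (cdfOf ν y + s * H.fn y))
        = fun y => (2 * y * cdfOf ν y) + s * (2 * y * H.fn y) := by
      intro s; funext y; ring
    have hTa : ∀ s : ℝ, Ta ν s H
        = (∫ y, 2 * y * cdfOf ν y ∂ν) + s * (∫ y, 2 * y * H.fn y ∂ν)
          + s * (H.integral (fun y => 2 * y * cdfOf ν y)
              + s * H.integral (fun y => 2 * y * H.fn y)) := by
      intro s
      unfold Ta
      rw [hrw s, integral_add (hg1 ν hνm) (((hg2 H ν hνm)).const_mul s),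
        integral_const_mul,
        H.integral_add_smul s (fun i => hg1 _ (H.moment i)) (fun i => hg2 H _ (H.moment i))]
    rw [hTa t, hTa 0]
    field_simp
    ring
  -- part 2
  have part2 : ∀ (H : MixCDF) (t C₁ C₂ : ℝ), (∀ y : ℝ, |H.fn y| ≤ C₁) → H.tvMoment ≤ C₂ →
      |t * H.integral (fun y => 2 * y * H.fn y)| ≤ 2 * |t| * C₁ * C₂ := by
    intro H t C₁ C₂ hb hm
    have hC₁ : 0 ≤ C₁ := (abs_nonneg _).trans (hb 0)
    have key : ∀ i, |∫ y, 2 * y * H.fn y ∂(H.meas i)| ≤ 2 * C₁ * ∫ y, y ∂(H.meas i) := by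
      intro i
      have hae : ∀ᵐ y ∂(H.meas i), 0 ≤ y := by
        rw [ae_iff]
        convert H.supp i using 2
        ext y; simp [Set.Iio, not_le]
      calc |∫ y, 2 * y * H.fn y ∂(H.meas i)|
            = ‖∫ y, 2 * y * H.fn y ∂(H.meas i)‖ := (Real.norm_eq_abs _).symm
        _ ≤ ∫ y, ‖2 * y * H.fn y‖ ∂(H.meas i) := norm_integral_le_integral_norm _
        _ = ∫ y, |2 * y * H.fn y| ∂(H.meas i) := by simp only [Real.norm_eq_abs]
        _ ≤ ∫ y, 2 * C₁ * y ∂(H.meas i) := by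
            refine integral_mono_ae ((hg2 H _ (H.moment i)).abs) ((H.moment i).const_mul _) ?_
            filter_upwards [hae] with y hy
            have h1 : |2 * y * H.fn y| = 2 * |y| * |H.fn y| := by
              rw [abs_mul, abs_mul]; norm_num
            rw [h1, abs_of_nonneg hy]
            have := hb y
            nlinarith [abs_nonneg (H.fn y)]
        _ = 2 * C₁ * ∫ y, y ∂(H.meas i) := integral_const_mul _ _
    have hint : ∀ i, 0 ≤ ∫ y, y ∂(H.meas i) := by
      intro i
      refine integral_nonneg_of_ae ?_
      have hae : ∀ᵐ y ∂(H.meas i), 0 ≤ y := by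
        rw [ae_iff]
        convert H.supp i using 2
        ext y; simp [Set.Iio, not_le]
      filter_upwards [hae] with y hy using hy
    have hsum : |H.integral (fun y => 2 * y * H.fn y)| ≤ 2 * C₁ * H.tvMoment := by
      unfold MixCDF.integral MixCDF.tvMoment
      calc |∑ i, H.coef i * ∫ y, 2 * y * H.fn y ∂(H.meas i)|
          ≤ ∑ i, |H.coef i * ∫ y, 2 * y * H.fn y ∂(H.meas i)| :=
            Finset.abs_sum_le_sum_abs _ _
        _ ≤ ∑ i, |H.coef i| * (2 * C₁ * ∫ y, y ∂(H.meas i)) := by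
            refine Finset.sum_le_sum fun i _ => ?_
            rw [abs_mul]
            exact mul_le_mul_of_nonneg_left (key i) (abs_nonneg _)
        _ = 2 * C₁ * ∑ i, |H.coef i| * ∫ y, y ∂(H.meas i) := by
            rw [Finset.mul_sum]; exact Finset.sum_congr rfl fun i _ => by ring
    rw [abs_mul]
    calc |t| * |H.integral (fun y => 2 * y * H.fn y)|
        ≤ |t| * (2 * C₁ * H.tvMoment) := mul_le_mul_of_nonneg_left hsum (abs_nonneg _)
      _ ≤ |t| * (2 * C₁ * C₂) := by
          refine mul_le_mul_of_nonneg_left ?_ (abs_nonneg _)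
          exact mul_le_mul_of_nonneg_left hm (by positivity)
      _ = 2 * |t| * C₁ * C₂ := by ring
  refine ⟨part1, part2, ?_⟩
  -- part 3
  intro C₁ C₂ ε hε
  refine ⟨ε / (2 * |C₁| * |C₂| + 1), by positivity, ?_⟩
  intro t ht htδ H hb hm
  rw [part1 H t ht]
  have heq : (∫ y, 2 * y * H.fn y ∂ν) + H.integral (fun y => 2 * y * cdfOf ν y)
        + t * H.integral (fun y => 2 * y * H.fn y)
      - ((∫ y, 2 * y * H.fn y ∂ν) + H.integral (fun y => 2 * y * cdfOf ν y))
      = t * H.integral (fun y => 2 * y * H.fn y) := by ring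
  rw [heq]
  have hbound := part2 H t C₁ C₂ hb hm
  have habs : C₁ * C₂ ≤ |C₁| * |C₂| := by
    calc C₁ * C₂ ≤ |C₁ * C₂| := le_abs_self _
      _ = |C₁| * |C₂| := abs_mul _ _
  have h3 : |t| * (2 * |C₁| * |C₂| + 1) < ε :=
    (lt_div_iff₀ (by positivity)).mp htδ
  nlinarith [abs_nonneg t, abs_nonneg (t * H.integral (fun y => 2 * y * H.fn y))]
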